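/- Let φ = (1+√5)/2 and let X ⊂ S² be the 12-point vertex set of the regular icosahedron inscribed in the unit sphere, given by all cyclic permutations of the coordinates of (0, ±1, ±φ)/√(1+φ²); its maximum pairwise inner product is α = 1/√5. Then for every unit vector y ∈ S² with y ∉ X, there exists x ∈ X with ⟨x,y⟩ > 1/√5; i.e., adjoining any new point of S² to X strictly increases the maximum pairwise inner product. -/

import Mathlib

open scoped RealInnerProductSpace

/-- The golden ratio `(1 + √5)/2`. -/
noncomputable def gr : ℝ := (1 + Real.sqrt 5) / 2

/-- Vertex set of the regular icosahedron inscribed in the unit sphere: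
all cyclic permutations of the coordinates of `(0, ±1, ±φ)/√(1+φ²)`. -/
noncomputable def icosahedron : Set (EuclideanSpace ℝ (Fin 3)) :=
  {v | ∃ s t : ℝ, (s = 1 ∨ s = -1) ∧ (t = 1 ∨ t = -1) ∧
    ((v 0 = 0 ∧ v 1 = s * (Real.sqrt (1 + gr ^ 2))⁻¹ ∧
        v 2 = t * gr * (Real.sqrt (1 + gr ^ 2))⁻¹) ∨
     (v 1 = 0 ∧ v 2 = s * (Real.sqrt (1 + gr ^ 2))⁻¹ ∧
        v 0 = t * gr * (Real.sqrt (1 + gr ^ 2))⁻¹) ∨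
     (v 2 = 0 ∧ v 0 = s * (Real.sqrt (1 + gr ^ 2))⁻¹ ∧
        v 1 = t * gr * (Real.sqrt (1 + gr ^ 2))⁻¹))}

noncomputable def cc : ℝ := (Real.sqrt (1 + gr ^ 2))⁻¹

noncomputable def V (p q r : ℝ) : EuclideanSpace ℝ (Fin 3) := WithLp.toLp 2 ![p, q, r]

lemma sqrt5_sq : Real.sqrt 5 ^ 2 = 5 := Real.sq_sqrt (by norm_num)
lemma sqrt5_pos : 0 < Real.sqrt 5 := Real.sqrt_pos.2 (by norm_num)
lemma gr_sq : gr ^ 2 = gr + 1 := by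
  have := sqrt5_sq; unfold gr; nlinarith
lemma gr_pos : 0 < gr := by have := sqrt5_pos; unfold gr; linarith
lemma cc_pos : 0 < cc := by
  have : (0:ℝ) < Real.sqrt (1 + gr ^ 2) := Real.sqrt_pos.2 (by nlinarith [gr_sq, gr_pos])
  exact inv_pos.2 this
lemma cc_sq : cc ^ 2 = (gr + 2)⁻¹ := by
  unfold cc
  rw [← Real.sqrt_inv, Real.sq_sqrt (by positivity)]
  rw [gr_sq]; ring_nf
lemma hsum : cc ^ 2 + (gr * cc) ^ 2 = 1 := by
  have h2 : gr + 2 ≠ 0 := by have := gr_pos; positivity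
  have h : cc ^ 2 + (gr * cc) ^ 2 = (gr + 2)⁻¹ * (1 + gr ^ 2) := by
    rw [← cc_sq]; ring
  rw [h, gr_sq]
  field_simp
  ring
lemma hab : gr * cc ^ 2 = (Real.sqrt 5)⁻¹ := by
  rw [cc_sq]
  have h5 : Real.sqrt 5 * gr = gr + 2 := by
    have := sqrt5_sq; unfold gr; nlinarith
  have := sqrt5_pos; have := gr_pos
  field_simp
  nlinarith [h5]
lemma hdiff : cc ^ 2 - (gr * cc) ^ 2 = -(Real.sqrt 5)⁻¹ := by
  have h := hab
  nlinarith [gr_sq, hab]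
lemma alpha_pos : 0 < (Real.sqrt 5)⁻¹ := inv_pos.2 sqrt5_pos
lemma alpha_sq : ((Real.sqrt 5)⁻¹) ^ 2 = 1/5 := by
  rw [← sqrt5_sq]; field_simp; rw [Real.sqrt_sq sqrt5_pos.le]

lemma V0 (p q r : ℝ) : V p q r 0 = p := rfl
lemma V1 (p q r : ℝ) : V p q r 1 = q := rfl
lemma V2 (p q r : ℝ) : V p q r 2 = r := rfl

lemma inner3 (x y : EuclideanSpace ℝ (Fin 3)) :
    ⟪x, y⟫ = x 0 * y 0 + x 1 * y 1 + x 2 * y 2 := by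
  simp [PiLp.inner_apply, Fin.sum_univ_three, RCLike.inner_apply]; ring

lemma memA (s t : ℝ) (hs : s = 1 ∨ s = -1) (ht : t = 1 ∨ t = -1) :
    V 0 (s * cc) (t * gr * cc) ∈ icosahedron :=
  ⟨s, t, hs, ht, Or.inl ⟨rfl, rfl, rfl⟩⟩
lemma memB (s t : ℝ) (hs : s = 1 ∨ s = -1) (ht : t = 1 ∨ t = -1) :
    V (t * gr * cc) 0 (s * cc) ∈ icosahedron :=
  ⟨s, t, hs, ht, Or.inr (Or.inl ⟨rfl, rfl, rfl⟩)⟩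
lemma memC (s t : ℝ) (hs : s = 1 ∨ s = -1) (ht : t = 1 ∨ t = -1) :
    V (s * cc) (t * gr * cc) 0 ∈ icosahedron :=
  ⟨s, t, hs, ht, Or.inr (Or.inr ⟨rfl, rfl, rfl⟩)⟩

lemma sq_le_of (e α : ℝ) (h1 : e ≤ α) (h2 : -e ≤ α) : e ^ 2 ≤ α ^ 2 := by
  nlinarith

set_option maxHeartbeats 1000000 in
/-- The regular icosahedron inscribed in the unit sphere has maximum pairwise inner product `α = (Real.sqrt 5)⁻¹`,
and adjoining any new unit vector strictly increases the maximum pairwise inner product: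
every unit vector `y ∉ X` has `⟪x, y⟫ > α` for some vertex `x`. -/
theorem stmt_16 :
    IsGreatest {r : ℝ | ∃ x ∈ icosahedron, ∃ y ∈ icosahedron, x ≠ y ∧ ⟪x, y⟫ = r} ((Real.sqrt 5)⁻¹) ∧
      ∀ y : EuclideanSpace ℝ (Fin 3), ‖y‖ = 1 → y ∉ icosahedron →
        ∃ x ∈ icosahedron, ⟪x, y⟫ > ((Real.sqrt 5)⁻¹) := by
  constructor
  · constructor
    · -- the value is attained
      refine ⟨V 0 (1 * cc) (1 * gr * cc), memA 1 1 (Or.inl rfl) (Or.inl rfl),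
        V (1 * cc) (1 * gr * cc) 0, memC 1 1 (Or.inl rfl) (Or.inl rfl), ?_, ?_⟩
      · intro h
        have h0 : (V 0 (1 * cc) (1 * gr * cc)) 0 = (V (1 * cc) (1 * gr * cc) 0) 0 := by rw [h]
        have : (0 : ℝ) = 1 * cc := h0
        have := cc_pos
        linarith
      · rw [inner3]
        show (0:ℝ) * (1 * cc) + 1 * cc * (1 * gr * cc) + 1 * gr * cc * 0 = _
        have := hab
        nlinarith [hab]
    · -- upper bound
      rintro r ⟨x, ⟨s, t, hs, ht, hx⟩, y, ⟨s', t', hs', ht', hy⟩, hxy, rfl⟩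
      rw [inner3]
      have key : ∀ u v : EuclideanSpace ℝ (Fin 3), u 0 = v 0 → u 1 = v 1 → u 2 = v 2 → u = v := by
        intro u v h0 h1 h2; ext i; fin_cases i <;> assumption
      rcases hx with ⟨h0, h1, h2⟩ | ⟨h1, h2, h0⟩ | ⟨h2, h0, h1⟩ <;>
        rcases hy with ⟨g0, g1, g2⟩ | ⟨g1, g2, g0⟩ | ⟨g2, g0, g1⟩ <;>
        rw [h0, h1, h2, g0, g1, g2] <;>
        rw [show (Real.sqrt (1 + gr ^ 2))⁻¹ = cc from rfl] <;>
        rcases hs with rfl | rfl <;> rcases ht with rfl | rfl <;>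
        rcases hs' with rfl | rfl <;> rcases ht' with rfl | rfl <;>
        first
        | (refine absurd (key x y ?_ ?_ ?_) hxy <;>
            solve | rw [h0, g0] | rw [h1, g1] | rw [h2, g2])
        | linarith [hsum, hdiff, hab, alpha_pos]
  · -- covering part
    intro y hy _
    by_contra hcon
    push_neg at hcon
    have hy2 : y 0 ^ 2 + y 1 ^ 2 + y 2 ^ 2 = 1 := by
      have h := real_inner_self_eq_norm_sq y
      rw [hy, inner3] at h
      nlinarith [h]
    have get : ∀ s t : ℝ, (s = 1 ∨ s = -1) → (t = 1 ∨ t = -1) →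
        (s * cc * y 1 + t * gr * cc * y 2 ≤ (Real.sqrt 5)⁻¹ ∧
         t * gr * cc * y 0 + s * cc * y 2 ≤ (Real.sqrt 5)⁻¹ ∧
         s * cc * y 0 + t * gr * cc * y 1 ≤ (Real.sqrt 5)⁻¹) := by
      intro s t hs ht
      refine ⟨?_, ?_, ?_⟩
      · have h := hcon _ (memA s t hs ht); rw [inner3] at h
        simp only [V0, V1, V2] at h
        linarith
      · have h := hcon _ (memB s t hs ht); rw [inner3] at h
        simp only [V0, V1, V2] at h
        linarith
      · have h := hcon _ (memC s t hs ht); rw [inner3] at h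
        simp only [V0, V1, V2] at h
        linarith
    obtain ⟨a1, b1, c1⟩ := get 1 1 (Or.inl rfl) (Or.inl rfl)
    obtain ⟨a2, b2, c2⟩ := get 1 (-1) (Or.inl rfl) (Or.inr rfl)
    obtain ⟨a3, b3, c3⟩ := get (-1) 1 (Or.inr rfl) (Or.inl rfl)
    obtain ⟨a4, b4, c4⟩ := get (-1) (-1) (Or.inr rfl) (Or.inr rfl)
    have s1 : (cc * y 1 + gr * cc * y 2) ^ 2 ≤ 1/5 := by
      rw [← alpha_sq]; apply sq_le_of <;> linarith
    have s2 : (cc * y 1 - gr * cc * y 2) ^ 2 ≤ 1/5 := by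
      rw [← alpha_sq]; apply sq_le_of <;> linarith
    have s3 : (gr * cc * y 0 + cc * y 2) ^ 2 ≤ 1/5 := by
      rw [← alpha_sq]; apply sq_le_of <;> linarith
    have s4 : (gr * cc * y 0 - cc * y 2) ^ 2 ≤ 1/5 := by
      rw [← alpha_sq]; apply sq_le_of <;> linarith
    have s5 : (cc * y 0 + gr * cc * y 1) ^ 2 ≤ 1/5 := by
      rw [← alpha_sq]; apply sq_le_of <;> linarith
    have s6 : (cc * y 0 - gr * cc * y 1) ^ 2 ≤ 1/5 := by
      rw [← alpha_sq]; apply sq_le_of <;> linarith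
    have keyid : (cc * y 1 + gr * cc * y 2) ^ 2 + (cc * y 1 - gr * cc * y 2) ^ 2 +
        (gr * cc * y 0 + cc * y 2) ^ 2 + (gr * cc * y 0 - cc * y 2) ^ 2 +
        (cc * y 0 + gr * cc * y 1) ^ 2 + (cc * y 0 - gr * cc * y 1) ^ 2 =
        2 * ((cc ^ 2 + (gr * cc) ^ 2) * (y 0 ^ 2 + y 1 ^ 2 + y 2 ^ 2)) := by ring
    rw [hsum, hy2] at keyid
    linarith
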